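/- Fix η ∈ (0, 1/2), reals V and v with |v| ≤ 1, and f ≥ 1. Let L = exp(ηV/f) + exp(−ηV/f) and C = (exp(ηV/f) − exp(−ηV/f))/f. Then exp(η(V+v)/f) + exp(−η(V+v)/f) − L ≤ η·v·C + (2η²/f²)·L. -/
import Mathlib

lemma exp_quad_bound (x : ℝ) (hx : |x| ≤ 1) : Real.exp x ≤ 1 + x + x ^ 2 := by
  have h := Real.exp_bound hx (by norm_num : 0 < 2)
  have hsum : ∑ i ∈ Finset.range 2, x ^ i / i.factorial = 1 + x := by
    simp [Finset.sum_range_succ]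
  rw [hsum] at h
  norm_num [Nat.factorial] at h
  nlinarith [sq_nonneg x, (abs_le.mp h).2, sq_abs x]

theorem surrogate_loss_single_step (η V v f : ℝ)
    (hη0 : 0 < η) (hη : η < 1/2) (hv : |v| ≤ 1) (hf : 1 ≤ f)
    (L C : ℝ)
    (hL : L = Real.exp (η * V / f) + Real.exp (-(η * V / f)))
    (hC : C = (Real.exp (η * V / f) - Real.exp (-(η * V / f))) / f) :
    Real.exp (η * (V + v) / f) + Real.exp (-(η * (V + v) / f)) - L
      ≤ η * v * C + (2 * η ^ 2 / f ^ 2) * L := by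
  have hf0 : (0 : ℝ) < f := lt_of_lt_of_le one_pos hf
  set a := η * V / f with ha
  set x := η * v / f with hx
  have hxabs : |x| ≤ 1 := by
    rw [hx, abs_div, abs_of_pos hf0, div_le_one hf0, abs_mul, abs_of_pos hη0]
    calc η * |v| ≤ η * 1 := by nlinarith [abs_nonneg v]
      _ ≤ 1 * f := by nlinarith
      _ = f := one_mul f
  have hnxabs : |(-x)| ≤ 1 := by rwa [abs_neg]
  have key : η * (V + v) / f = a + x := by rw [ha, hx]; ring
  have key2 : -(η * (V + v) / f) = -a + -x := by rw [ha, hx]; ring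
  rw [key, neg_add, Real.exp_add, Real.exp_add]
  have e1 := exp_quad_bound x hxabs
  have e2 := exp_quad_bound (-x) hnxabs
  have hpa : 0 < Real.exp a := Real.exp_pos a
  have hpna : 0 < Real.exp (-a) := Real.exp_pos (-a)
  have b1 : Real.exp a * Real.exp x ≤ Real.exp a * (1 + x + x ^ 2) := by
    exact mul_le_mul_of_nonneg_left e1 hpa.le
  have b2 : Real.exp (-a) * Real.exp (-x) ≤ Real.exp (-a) * (1 - x + x ^ 2) := by
    have := mul_le_mul_of_nonneg_left e2 hpna.le
    simpa [neg_sq, sub_eq_add_neg] using this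
  have hxsq : x ^ 2 ≤ η ^ 2 / f ^ 2 := by
    rw [hx, div_pow, mul_pow]
    have : v ^ 2 ≤ 1 := by nlinarith [sq_abs v, abs_nonneg v]
    have hη2 : (0:ℝ) ≤ η ^ 2 := sq_nonneg η
    have hf2 : (0:ℝ) < f ^ 2 := by positivity
    gcongr
    nlinarith
  have hCval : η * v * C = x * (Real.exp a - Real.exp (-a)) := by
    rw [hC, hx, ha]; ring
  have hLpos : 0 < L := by rw [hL, ha]; positivity
  have hfin : x ^ 2 * L ≤ (2 * η ^ 2 / f ^ 2) * L := by
    have : x ^ 2 ≤ 2 * η ^ 2 / f ^ 2 := by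
      have hη2 : (0:ℝ) ≤ η ^ 2 / f ^ 2 := by positivity
      calc x ^ 2 ≤ η ^ 2 / f ^ 2 := hxsq
        _ ≤ 2 * η ^ 2 / f ^ 2 := by rw [mul_div_assoc]; linarith
    exact mul_le_mul_of_nonneg_right this hLpos.le
  rw [hL] at hfin ⊢
  rw [hCval, ha] at *
  nlinarith [b1, b2, hfin]
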